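/- Let D be a triangulated category and A ⊆ D a right admissible full triangulated subcategory. Then every object X of D fits into a distinguished triangle Y → X → Z → Y[1] with Y ∈ A and Z ∈ A^⊥, where A^⊥ = { B ∈ D : Hom_D(A', B[i]) = 0 for all A' ∈ A and all i }. -/

import Mathlib

/-!
STATEMENT 3: Let `D` be a triangulated category and `A ⊆ D` a right admissible full
triangulated subcategory (the inclusion `A ↪ D` has a right adjoint).  Then every object
`X` of `D` fits into a distinguished triangle `Y ⟶ X ⟶ Z ⟶ Y[1]` with `Y ∈ A` and
`Z ∈ A^⊥`, where `A^⊥ = {B : Hom(A', B[i]) = 0 for all A' ∈ A and all i}`.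
-/

open CategoryTheory CategoryTheory.Limits CategoryTheory.Pretriangulated

namespace CategoryTheory.Triangulated

/-- The structure `Triangulated.Subcategory` of Mathlib (December 2024), removed since. -/
structure Subcategory (C : Type*) [Category C] [HasZeroObject C] [HasShift C ℤ]
    [Preadditive C] [∀ n : ℤ, (shiftFunctor C n).Additive] [Pretriangulated C] where
  P : C → Prop
  zero' : ∃ (Z : C) (_ : IsZero Z), P Z
  shift (X : C) (n : ℤ) : P X → P (X⟦n⟧)
  ext₂' (T : Triangle C) (_ : T ∈ distTriang C) : P T.obj₁ → P T.obj₃ →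
    ObjectProperty.isoClosure P T.obj₂

end CategoryTheory.Triangulated

theorem right_admissible_semiorthogonal_decomposition
    (D : Type*) [Category D] [HasZeroObject D] [Preadditive D]
    [HasShift D ℤ] [∀ i : ℤ, (shiftFunctor D i).Additive] [Pretriangulated D]
    -- A is a full triangulated subcategory of D
    (A : Triangulated.Subcategory D)
    -- A is right admissible: the inclusion has a right adjoint
    (hadm : (ObjectProperty.ι A.P).IsLeftAdjoint) :
    ∀ X : D, ∃ (Y Z : D) (f : Y ⟶ X) (g : X ⟶ Z) (h : Z ⟶ Y⟦(1 : ℤ)⟧),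
      (Triangle.mk f g h ∈ distTriang D) ∧ A.P Y ∧
        (∀ A' : D, A.P A' → ∀ i : ℤ, Subsingleton (A' ⟶ Z⟦i⟧)) := by
  obtain ⟨R, ⟨adj⟩⟩ := hadm.exists_rightAdjoint
  intro X
  set ι := ObjectProperty.ι A.P
  set Y : D := ι.obj (R.obj X) with hYdef
  set f : Y ⟶ X := adj.counit.app X with hfdef
  obtain ⟨Z, g, h, hT⟩ := Pretriangulated.distinguished_cocone_triangle f
  -- bijectivity of composition with the counit, for objects of A
  have hsurj : ∀ (B : D) (_ : A.P B) (u : B ⟶ X), ∃ w : B ⟶ Y, w ≫ f = u := by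
    intro B hB u
    refine ⟨((adj.homEquiv ⟨B, hB⟩ X) u).hom, ?_⟩
    have := (adj.homEquiv ⟨B, hB⟩ X).symm_apply_apply u
    rwa [adj.homEquiv_counit] at this
  have hinj : ∀ (B : D) (_ : A.P B) (w : B ⟶ Y), w ≫ f = 0 → w = 0 := by
    intro B hB w hw
    have h1 : (adj.homEquiv ⟨B, hB⟩ X).symm (show (⟨B, hB⟩ : ObjectProperty.FullSubcategory A.P) ⟶ R.obj X from ObjectProperty.homMk w)
        = (adj.homEquiv ⟨B, hB⟩ X).symm 0 := by
      rw [adj.homEquiv_counit, adj.homEquiv_counit]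
      simp only [Functor.map_zero, zero_comp]
      exact hw
    have := (adj.homEquiv ⟨B, hB⟩ X).symm.injective h1
    simpa using congrArg (fun k => k.hom) this
  -- Hom(B, Z) = 0 for B ∈ A
  have hZ : ∀ (B : D) (_ : A.P B) (φ : B ⟶ Z), φ = 0 := by
    intro B hB φ
    have h31 : h ≫ (shiftFunctor D (1:ℤ)).map f = 0 := by
      exact Pretriangulated.comp_distTriang_mor_zero₃₁ _ hT
    have hψ : φ ≫ h = 0 := by
      have hc : (φ ≫ h) ≫ (shiftFunctor D (1:ℤ)).map f = 0 := by
        rw [Category.assoc, h31, comp_zero]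
      have hc2 : (shiftFunctor D (-1:ℤ)).map (φ ≫ h) ≫
          (shiftFunctor D (-1:ℤ)).map ((shiftFunctor D (1:ℤ)).map f) = 0 := by
        rw [← Functor.map_comp, hc, Functor.map_zero]
      have hnat : (shiftFunctor D (-1:ℤ)).map ((shiftFunctor D (1:ℤ)).map f) ≫
          (shiftFunctorCompIsoId D (1:ℤ) (-1:ℤ) (by omega)).hom.app X
          = (shiftFunctorCompIsoId D (1:ℤ) (-1:ℤ) (by omega)).hom.app Y ≫ f :=
        (shiftFunctorCompIsoId D (1:ℤ) (-1:ℤ) (by omega)).hom.naturality f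
      have hc' : ((shiftFunctor D (-1:ℤ)).map (φ ≫ h) ≫
          (shiftFunctorCompIsoId D (1:ℤ) (-1:ℤ) (by omega)).hom.app Y) ≫ f = 0 := by
        rw [Category.assoc, ← hnat, ← Category.assoc, hc2, zero_comp]
      have h0 := hinj (B⟦(-1:ℤ)⟧) (A.shift B (-1) hB) _ hc'
      have h0' : (shiftFunctor D (-1:ℤ)).map (φ ≫ h) = 0 := by
        have := h0 =≫ (shiftFunctorCompIsoId D (1:ℤ) (-1:ℤ) (by omega)).inv.app Y
        simpa using this
      exact (shiftFunctor D (-1:ℤ)).map_injective (by rw [h0', Functor.map_zero])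
    obtain ⟨u, hu⟩ := Pretriangulated.Triangle.coyoneda_exact₃ _ hT φ hψ
    obtain ⟨w, hw⟩ := hsurj B hB u
    have h12 : f ≫ g = 0 := by
      exact Pretriangulated.comp_distTriang_mor_zero₁₂ _ hT
    simp only [Triangle.mk_obj₂, Triangle.mk_obj₃, Triangle.mk_mor₂] at hu
    rw [hu, ← hw]
    exact (by rw [Category.assoc, h12, comp_zero] : (w ≫ f) ≫ g = 0)
  refine ⟨Y, Z, f, g, h, hT, (R.obj X).property, ?_⟩
  intro A' hA' i
  constructor
  intro φ₁ φ₂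
  suffices hsub : ∀ φ : A' ⟶ Z⟦i⟧, φ = 0 by rw [hsub φ₁, hsub φ₂]
  intro φ
  have hc : (shiftFunctor D (-i)).map φ ≫
      (shiftFunctorCompIsoId D i (-i) (by omega)).hom.app Z = 0 :=
    hZ _ (A.shift A' (-i) hA') _
  have : (shiftFunctor D (-i)).map φ = 0 := by
    have := hc =≫ (shiftFunctorCompIsoId D i (-i) (by omega)).inv.app Z
    simpa using this
  exact (shiftFunctor D (-i)).map_injective (by simpa using this)
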